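/- In the DKS reduction graph, for any budget k, there exists an optimal blocker set for the influence minimization problem that is entirely contained in C (i.e., blocks no vertex of D): for any blocker set B of size at most k, there is a blocker set B' ⊆ C with |B'| ≤ |B| achieving spread at most that of B. -/

import Mathlib

/-!
The reduction graph from Densest-k-Subgraph to Influence Minimization.
The undirected graph `H` has `N` vertices and `M` edges, given by an
endpoint map `ends : Fin M → Fin N × Fin N`.  The reduction graph `G'` has
a seed vertex `Sum.inl ()`, a layer `C` of vertices `Sum.inr (Sum.inl i)`
(one per vertex of `H`) and a layer `D` of vertices `Sum.inr (Sum.inr j)`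
(one per edge of `H`); the seed points to every vertex of `C`, and each
`c` points to the `D`-vertices of the edges it is an endpoint of.  All
propagation probabilities are `1`, so the spread equals the number of
vertices reachable from the seed after removing the blocked vertices.
-/

open Finset

noncomputable section
open scoped Classical

/-- The vertex set of the reduction graph: seed ⊕ C ⊕ D. -/
abbrev DksV (N M : ℕ) := Unit ⊕ Fin N ⊕ Fin M

/-- Adjacency of the reduction graph. -/
def dksAdj {N M : ℕ} (ends : Fin M → Fin N × Fin N) :
    DksV N M → DksV N M → Prop
  | Sum.inl _, Sum.inr (Sum.inl _) => True
  | Sum.inr (Sum.inl i), Sum.inr (Sum.inr j) =>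
      (ends j).1 = i ∨ (ends j).2 = i
  | _, _ => False

/-- Number of vertices reachable from the seed in the reduction graph after
removing the blocker set `B` (the spread, since all probabilities are `1`). -/
def dksSpread {N M : ℕ} (ends : Fin M → Fin N × Fin N)
    (B : Finset (DksV N M)) : ℕ :=
  (Finset.univ.filter fun w : DksV N M =>
      Relation.ReflTransGen
        (fun a b => dksAdj ends a b ∧ a ∉ B ∧ b ∉ B) (Sum.inl ()) w).card

def dksP {N M : ℕ} (ends : Fin M → Fin N × Fin N) (B : Finset (DksV N M)) :
    DksV N M → Prop
  | Sum.inl _ => True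
  | Sum.inr (Sum.inl i) => Sum.inr (Sum.inl i) ∉ B
  | Sum.inr (Sum.inr j) => Sum.inr (Sum.inr j) ∉ B ∧
      ((Sum.inr (Sum.inl (ends j).1) : DksV N M) ∉ B ∨
        (Sum.inr (Sum.inl (ends j).2) : DksV N M) ∉ B)

lemma dks_reach_iff {N M : ℕ} (ends : Fin M → Fin N × Fin N)
    (B : Finset (DksV N M)) (hseed : (Sum.inl () : DksV N M) ∉ B) (w : DksV N M) :
    Relation.ReflTransGen
        (fun a b => dksAdj ends a b ∧ a ∉ B ∧ b ∉ B) (Sum.inl ()) w ↔ dksP ends B w := by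
  constructor
  · intro h
    induction h with
    | refl => trivial
    | tail _ h2 ih =>
      rename_i b c _
      obtain ⟨hadj, hb, hc⟩ := h2
      match b, c with
      | Sum.inl _, Sum.inr (Sum.inl i) => exact hc
      | Sum.inr (Sum.inl i), Sum.inr (Sum.inr j) =>
        refine ⟨hc, ?_⟩
        rcases hadj with h | h
        · exact Or.inl (h ▸ hb)
        · exact Or.inr (h ▸ hb)
  · intro h
    match w with
    | Sum.inl () => exact Relation.ReflTransGen.refl
    | Sum.inr (Sum.inl i) =>
      exact Relation.ReflTransGen.single ⟨trivial, hseed, h⟩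
    | Sum.inr (Sum.inr j) =>
      obtain ⟨hj, he⟩ := h
      rcases he with he | he
      · have s1 : dksAdj ends (Sum.inl () : DksV N M) (Sum.inr (Sum.inl (ends j).1)) := trivial
        exact Relation.ReflTransGen.head ⟨s1, hseed, he⟩
          (Relation.ReflTransGen.single ⟨Or.inl rfl, he, hj⟩)
      · have s1 : dksAdj ends (Sum.inl () : DksV N M) (Sum.inr (Sum.inl (ends j).2)) := trivial
        exact Relation.ReflTransGen.head ⟨s1, hseed, he⟩
          (Relation.ReflTransGen.single ⟨Or.inr rfl, he, hj⟩)

lemma dks_spread_eq {N M : ℕ} (ends : Fin M → Fin N × Fin N)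
    (B : Finset (DksV N M)) (hseed : (Sum.inl () : DksV N M) ∉ B) :
    dksSpread ends B =
      1 + (univ.filter fun i : Fin N => (Sum.inr (Sum.inl i) : DksV N M) ∉ B).card
        + (univ.filter fun j : Fin M => (Sum.inr (Sum.inr j) : DksV N M) ∉ B ∧
            ((Sum.inr (Sum.inl (ends j).1) : DksV N M) ∉ B ∨
              (Sum.inr (Sum.inl (ends j).2) : DksV N M) ∉ B)).card := by
  unfold dksSpread
  rw [Finset.filter_congr (fun w _ => dks_reach_iff ends B hseed w)]
  rw [Finset.card_filter, Finset.card_filter, Finset.card_filter]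
  rw [Fintype.sum_sum_type, Fintype.sum_sum_type]
  simp [dksP]
  rw [Finset.card_filter]
  ring_nf
  congr 1
  · congr 1
    exact Finset.sum_congr rfl fun x _ => by split_ifs <;> simp_all
  · exact Finset.sum_congr rfl fun x _ => by congr

/-- in the reduction graph there is always an optimal blocker
set contained in the layer `C`: for any budget `k` and any blocker set `B`
(not containing the seed) of size at most `k`, there is a blocker set
`B' ⊆ C` with `|B'| ≤ |B|` whose spread is at most that of `B`. -/
theorem dks_optimal_blockers_in_C {N M : ℕ} (ends : Fin M → Fin N × Fin N)
    (hends : ∀ j, (ends j).1 ≠ (ends j).2)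
    (k : ℕ) (B : Finset (DksV N M))
    (hseed : (Sum.inl () : DksV N M) ∉ B) (hk : B.card ≤ k) :
    ∃ B' : Finset (DksV N M),
      (∀ x ∈ B', ∃ i : Fin N, x = Sum.inr (Sum.inl i)) ∧
      B'.card ≤ B.card ∧
      dksSpread ends B' ≤ dksSpread ends B := by
  classical
  set IC : Finset (Fin N) :=
    univ.filter fun i : Fin N => (Sum.inr (Sum.inl i) : DksV N M) ∈ B with hIC
  set ID : Finset (Fin M) :=
    univ.filter fun j : Fin M => (Sum.inr (Sum.inr j) : DksV N M) ∈ B with hID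
  have hICmem : ∀ i : Fin N, i ∈ IC ↔ (Sum.inr (Sum.inl i) : DksV N M) ∈ B := by
    intro i; simp [hIC]
  have hIDmem : ∀ j : Fin M, j ∈ ID ↔ (Sum.inr (Sum.inr j) : DksV N M) ∈ B := by
    intro j; simp [hID]
  -- card of B
  have hBcard : B.card = IC.card + ID.card := by
    have h1 : B.card = ∑ x : DksV N M, if x ∈ B then 1 else 0 := by
      rw [← Finset.card_filter]
      congr 1
      simp
    rw [h1, Fintype.sum_sum_type, Fintype.sum_sum_type, hIC, hID,
      Finset.card_filter, Finset.card_filter]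
    simp [hseed]
  -- choose extra blocked C-vertices
  obtain ⟨S, hSsub, hScard⟩ :=
    Finset.exists_subset_card_eq (s := ICᶜ) (min_le_right ID.card ICᶜ.card)
  have hdisj : Disjoint IC S :=
    Finset.disjoint_left.mpr fun i hi hiS => (Finset.mem_compl.mp (hSsub hiS)) hi
  set B' : Finset (DksV N M) :=
    (IC ∪ S).image (fun i => (Sum.inr (Sum.inl i) : DksV N M)) with hB'
  have hmem : ∀ i : Fin N, (Sum.inr (Sum.inl i) : DksV N M) ∈ B' ↔ i ∈ IC ∪ S := by
    intro i; simp [hB']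
  have hDnot : ∀ j : Fin M, (Sum.inr (Sum.inr j) : DksV N M) ∉ B' := by
    intro j; simp [hB']
  have hseed' : (Sum.inl () : DksV N M) ∉ B' := by simp [hB']
  have hinj : Function.Injective (fun i : Fin N => (Sum.inr (Sum.inl i) : DksV N M)) := by
    intro a b h; simpa using h
  have hB'card : B'.card = IC.card + S.card := by
    rw [hB', Finset.card_image_of_injective _ hinj, Finset.card_union_of_disjoint hdisj]
  refine ⟨B', ?_, ?_, ?_⟩
  · intro x hx
    simp only [hB', Finset.mem_image] at hx
    obtain ⟨i, _, rfl⟩ := hx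
    exact ⟨i, rfl⟩
  · rw [hB'card, hBcard]
    have := min_le_left ID.card ICᶜ.card
    omega
  · rw [dks_spread_eq ends B hseed, dks_spread_eq ends B' hseed']
    -- C-layer counts
    have hCB : (univ.filter fun i : Fin N => (Sum.inr (Sum.inl i) : DksV N M) ∉ B) = ICᶜ := by
      ext i; simp [hICmem]
    have hCB' : (univ.filter fun i : Fin N => (Sum.inr (Sum.inl i) : DksV N M) ∉ B') = (IC ∪ S)ᶜ := by
      ext i; simp [hmem]
    rw [hCB, hCB']
    rw [Finset.card_compl, Finset.card_compl, Finset.card_union_of_disjoint hdisj]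
    -- D-layer counts
    set fD := univ.filter fun j : Fin M => (Sum.inr (Sum.inr j) : DksV N M) ∉ B ∧
            ((Sum.inr (Sum.inl (ends j).1) : DksV N M) ∉ B ∨
              (Sum.inr (Sum.inl (ends j).2) : DksV N M) ∉ B) with hfD
    set fD' := univ.filter fun j : Fin M => (Sum.inr (Sum.inr j) : DksV N M) ∉ B' ∧
            ((Sum.inr (Sum.inl (ends j).1) : DksV N M) ∉ B' ∨
              (Sum.inr (Sum.inl (ends j).2) : DksV N M) ∉ B') with hfD'
    have hDbound : fD'.card ≤ fD.card + S.card := by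
      rcases le_or_gt ID.card ICᶜ.card with hm | hm
      · -- S.card = ID.card; fD' ⊆ fD ∪ ID
        have hS : S.card = ID.card := by rw [hScard]; exact min_eq_left hm
        have hsub : fD' ⊆ fD ∪ ID := by
          intro j hj
          simp only [hfD', Finset.mem_filter, Finset.mem_univ, true_and] at hj
          obtain ⟨-, he⟩ := hj
          by_cases hjB : (Sum.inr (Sum.inr j) : DksV N M) ∈ B
          · exact Finset.mem_union_right _ ((hIDmem j).mpr hjB)
          · refine Finset.mem_union_left _ ?_
            simp only [hfD, Finset.mem_filter, Finset.mem_univ, true_and]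
            refine ⟨hjB, ?_⟩
            rcases he with he | he
            · left
              intro hB1
              exact he ((hmem _).mpr (Finset.mem_union_left _ ((hICmem _).mpr hB1)))
            · right
              intro hB2
              exact he ((hmem _).mpr (Finset.mem_union_left _ ((hICmem _).mpr hB2)))
        calc fD'.card ≤ (fD ∪ ID).card := Finset.card_le_card hsub
          _ ≤ fD.card + ID.card := Finset.card_union_le _ _
          _ = fD.card + S.card := by rw [hS]
      · -- IC ∪ S = univ, so fD' = ∅
        have hS : S.card = ICᶜ.card := by rw [hScard]; exact min_eq_right hm.le
        have huniv : IC ∪ S = univ := by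
          apply Finset.eq_univ_of_card
          rw [Finset.card_union_of_disjoint hdisj, hS, Finset.card_compl]
          have := Finset.card_le_univ IC
          simp at this ⊢
          omega
        have : fD' = ∅ := by
          ext j
          simp only [hfD', Finset.mem_filter, Finset.mem_univ, true_and,
            Finset.notMem_empty, iff_false]
          rintro ⟨-, he | he⟩ <;>
            exact he ((hmem _).mpr (huniv ▸ Finset.mem_univ _))
        simp [this]
    have hSle : S.card ≤ ICᶜ.card := by rw [hScard]; exact min_le_right _ _
    have h1 : IC.card + S.card ≤ Fintype.card (Fin N) := by
      have := Finset.card_compl IC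
      have h2 := Finset.card_le_univ IC
      simp at h2
      rw [Finset.card_compl] at hSle
      simp at hSle this ⊢
      omega
    have h2 : IC.card ≤ Fintype.card (Fin N) := by
      have := Finset.card_le_univ IC
      simpa using this
    omega
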